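/- Assume L ∈ ℝ^{n×n} satisfies L𝟙 = 0, 𝟙ᵀL = 0, ker L = span{𝟙}, and σ = ‖I − Π − L‖ < 1; let 0 < μ ≤ L_f and let g_1, …, g_n : ℝ → ℝ satisfy the sector bound on (μ, L_f) about x_opt with Σᵢ g_i(x_opt) = 0; let α ≠ 0, ζ ≠ 0, η ≠ 0, δ ∈ ℝ. Define A_p = [[1,0],[0,0]], B_pu = (−α,0)ᵀ, A_q = [[1,0],[1,1]], B_qu = (−α,0)ᵀ, B_qv = (−ζ,−1)ᵀ, C_x = (1,0), D_xu = 0, D_xv = −1, C_y = (δ,η), M_0 = [[−2μL_f, L_f+μ],[L_f+μ, −2]], M_1 = [[σ²−1, 1],[1, −1]]. Suppose there exist symmetric positive definite P, Q ∈ ℝ^{2×2}, λ_0, λ_1 ≥ 0, and ρ ∈ (0,1) such that (i) [A_p B_pu; I₂ 0]ᵀ·blkdiag(P, −ρ²P)·[A_p B_pu; I₂ 0] + λ_0·[C_x D_xu; 0 1]ᵀ M_0 [C_x D_xu; 0 1] ⪯ 0, and (ii) [A_q B_qu B_qv; I₂ 0 0]ᵀ·blkdiag(Q, −ρ²Q)·[A_q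 B_qu B_qv; I₂ 0 0] + λ_0·[C_x D_xu D_xv; 0 1 0]ᵀ M_0 [C_x D_xu D_xv; 0 1 0] + λ_1·[C_y 0 0; 0 0 1]ᵀ M_1 [C_y 0 0; 0 0 1] ⪯ 0. Then, letting (w1*, ŵ2*) be the unique fixed point of G_m and T = P ⊗ Π + Q ⊗ (I − Π), every trajectory (w1^k, ŵ2^k) of G_m satisfies, for all k ≥ 0, ‖w1^k − w1*‖² + ‖ŵ2^k − ŵ2*‖² ≤ cond(T)·ρ^{2k}·(‖w1^0 − w1*‖² + ‖ŵ2^0 − ŵ2*‖²), where cond(T) = λ_max(T)/λ_min(T). -/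

import Mathlib

open Matrix Kronecker

/-- The ℓ² operator (spectral) norm of a real square matrix. -/
noncomputable def matSpectralNorm {n : ℕ} (M : Matrix (Fin n) (Fin n) ℝ) : ℝ :=
  ‖Matrix.toEuclideanCLM (𝕜 := ℝ) M‖

/-- The all-ones vector 𝟙 ∈ ℝⁿ. -/
def onesVec (n : ℕ) : Fin n → ℝ := fun _ => 1

/-- The projection Π = (1/n)𝟙𝟙ᵀ onto the consensus subspace. -/
noncomputable def consensusProj (n : ℕ) : Matrix (Fin n) (Fin n) ℝ :=
  Matrix.of fun _ _ => (n : ℝ)⁻¹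

/-- The sector-IQC matrix `M₀ = [[−2μL_f, L_f+μ],[L_f+μ, −2]]` (indexed by `Fin 1 ⊕ Fin 1`). -/
noncomputable def M0mat (μ Lf : ℝ) : Matrix (Fin 1 ⊕ Fin 1) (Fin 1 ⊕ Fin 1) ℝ :=
  fromBlocks !![-2 * μ * Lf] !![Lf + μ] !![Lf + μ] !![-2]

/-- The graph-IQC matrix `M₁ = [[σ²−1, 1],[1, −1]]` (indexed by `Fin 1 ⊕ Fin 1`). -/
noncomputable def M1mat (σ : ℝ) : Matrix (Fin 1 ⊕ Fin 1) (Fin 1 ⊕ Fin 1) ℝ :=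
  fromBlocks !![σ ^ 2 - 1] !![1] !![1] !![-1]

/-- `blkdiag(P, −ρ²P)`. -/
noncomputable def blkDiagRho {d : ℕ} (P : Matrix (Fin d) (Fin d) ℝ) (ρ : ℝ) :
    Matrix (Fin d ⊕ Fin d) (Fin d ⊕ Fin d) ℝ :=
  fromBlocks P 0 0 ((-(ρ ^ 2)) • P)


/-- `[A_p B_pu; I 0]` for the consensus-direction LMI. -/
noncomputable def Xp (α : ℝ) : Matrix (Fin 2 ⊕ Fin 2) (Fin 2 ⊕ Fin 1) ℝ :=
  fromBlocks !![(1 : ℝ), 0; 0, 0] !![-α; 0] 1 0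

/-- `[C_x D_xu; 0 1]` for the consensus-direction LMI. -/
noncomputable def Yp : Matrix (Fin 1 ⊕ Fin 1) (Fin 2 ⊕ Fin 1) ℝ :=
  fromBlocks !![(1 : ℝ), 0] !![(0 : ℝ)] 0 1

/-- `[A_q B_qu B_qv; I 0 0]` for the disagreement-direction LMI. -/
noncomputable def Xq (α ζ : ℝ) : Matrix (Fin 2 ⊕ Fin 2) (Fin 2 ⊕ (Fin 1 ⊕ Fin 1)) ℝ :=
  fromBlocks !![(1 : ℝ), 0; 1, 1] (fromCols !![-α; 0] !![-ζ; -1]) 1 0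

/-- `[C_x D_xu D_xv; 0 1 0]` for the disagreement-direction LMI. -/
noncomputable def Yqx : Matrix (Fin 1 ⊕ Fin 1) (Fin 2 ⊕ (Fin 1 ⊕ Fin 1)) ℝ :=
  fromBlocks !![(1 : ℝ), 0] (fromCols !![(0 : ℝ)] !![(-1 : ℝ)]) 0 (fromCols 1 0)

/-- `[C_y 0 0; 0 0 1]` for the disagreement-direction LMI. -/
noncomputable def Yqy (δ η : ℝ) : Matrix (Fin 1 ⊕ Fin 1) (Fin 2 ⊕ (Fin 1 ⊕ Fin 1)) ℝ :=
  fromBlocks !![δ, η] 0 0 (fromCols 0 1)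

/-! ### Auxiliary lemmas -/

/-- Scalar quadratic form of a 2×2 matrix. -/
def SVLqf (Q : Matrix (Fin 2) (Fin 2) ℝ) (x y : ℝ) : ℝ :=
  Q 0 0 * x * x + Q 0 1 * x * y + Q 1 0 * y * x + Q 1 1 * y * y

lemma SVL_lmi1 {P : Matrix (Fin 2) (Fin 2) ℝ} {α ρ lam0 μ Lf : ℝ}
    (h : (-((Xp α)ᵀ * blkDiagRho P ρ * Xp α + lam0 • (Ypᵀ * M0mat μ Lf * Yp))).PosSemidef)
    (a b c : ℝ) :
    SVLqf P (a - α*c) 0 - ρ^2 * SVLqf P a b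
      + lam0 * (-2*μ*Lf * a^2 + 2*(Lf+μ)*a*c - 2*c^2) ≤ 0 := by
  have := h.dotProduct_mulVec_nonneg (Sum.elim ![a, b] ![c])
  simp [Xp, Yp, blkDiagRho, M0mat, dotProduct, mulVec, Matrix.mul_apply,
    Fintype.sum_sum_type, Fin.sum_univ_two, Fin.sum_univ_one,
    Matrix.one_apply] at this
  simp only [SVLqf]
  nlinarith [this]

lemma SVL_lmi2 {Q : Matrix (Fin 2) (Fin 2) ℝ} {α ζ δ η ρ lam0 lam1 μ Lf σ : ℝ}
    (h : (-((Xq α ζ)ᵀ * blkDiagRho Q ρ * Xq α ζ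
          + lam0 • (Yqxᵀ * M0mat μ Lf * Yqx)
          + lam1 • ((Yqy δ η)ᵀ * M1mat σ * Yqy δ η))).PosSemidef)
    (a b c d : ℝ) :
    SVLqf Q (a - α*c - ζ*d) (a + b - d) - ρ^2 * SVLqf Q a b
      + lam0 * (-2*μ*Lf * (a-d)^2 + 2*(Lf+μ)*(a-d)*c - 2*c^2)
      + lam1 * ((σ^2-1)*(δ*a+η*b)^2 + 2*(δ*a+η*b)*d - d^2) ≤ 0 := by
  have := h.dotProduct_mulVec_nonneg (Sum.elim ![a, b] (Sum.elim ![c] ![d]))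
  simp [Xq, Yqx, Yqy, blkDiagRho, M0mat, M1mat, dotProduct, mulVec, Matrix.mul_apply,
    Fintype.sum_sum_type, Fin.sum_univ_two, Fin.sum_univ_one,
    fromCols_apply_inl, fromCols_apply_inr, Matrix.one_apply] at this
  simp only [SVLqf]
  nlinarith [this]

lemma SVL_quad_eig_bounds {m : Type*} [Fintype m] [DecidableEq m] [Nonempty m]
    (T : Matrix m m ℝ) (hT : T.IsHermitian) (z : m → ℝ) :
    (⨅ j, hT.eigenvalues j) * (∑ i, z i ^ 2) ≤ z ⬝ᵥ (T *ᵥ z) ∧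
      z ⬝ᵥ (T *ᵥ z) ≤ (⨆ j, hT.eigenvalues j) * (∑ i, z i ^ 2) := by
  classical
  set U : Matrix m m ℝ := (hT.eigenvectorUnitary : Matrix m m ℝ) with hU
  have hUU : U * star U = 1 := (Matrix.mem_unitaryGroup_iff).mp hT.eigenvectorUnitary.2
  set w : m → ℝ := star U *ᵥ z with hw
  have hquad : z ⬝ᵥ (T *ᵥ z) = ∑ i, hT.eigenvalues i * w i ^ 2 := by
    conv_lhs => rw [hT.spectral_theorem, Unitary.conjStarAlgAut_apply]
    rw [← mulVec_mulVec, ← mulVec_mulVec, dotProduct_mulVec]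
    have hzU : z ᵥ* U = w := by
      ext j
      simp [hw, vecMul, mulVec, dotProduct, star_eq_conjTranspose, conjTranspose_apply,
        mul_comm]
    rw [hzU]
    simp only [dotProduct]
    refine Finset.sum_congr rfl fun i _ => ?_
    rw [mulVec_diagonal, ← hw]
    simp [RCLike.ofReal]
    ring
  have hnorm : ∑ i, w i ^ 2 = ∑ i, z i ^ 2 := by
    have h1 : w ᵥ* star U = U *ᵥ w := by
      ext j
      simp [vecMul, mulVec, dotProduct, star_eq_conjTranspose, conjTranspose_apply, mul_comm]
    have : w ⬝ᵥ w = z ⬝ᵥ z := by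
      conv_lhs => rw [hw]
      rw [dotProduct_mulVec, h1, hw, mulVec_mulVec, hUU, one_mulVec, dotProduct_comm]
    simpa [dotProduct, sq] using this
  have hsq : ∀ i : m, (0:ℝ) ≤ w i ^ 2 := fun i => sq_nonneg _
  have hbdd : BddAbove (Set.range hT.eigenvalues) := Set.finite_range _ |>.bddAbove
  have hbddb : BddBelow (Set.range hT.eigenvalues) := Set.finite_range _ |>.bddBelow
  constructor
  · rw [hquad, ← hnorm, Finset.mul_sum]
    exact Finset.sum_le_sum fun i _ => mul_le_mul_of_nonneg_right (ciInf_le hbddb i) (hsq i)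
  · rw [hquad, ← hnorm, Finset.mul_sum]
    exact Finset.sum_le_sum fun i _ => mul_le_mul_of_nonneg_right (le_ciSup hbdd i) (hsq i)

open scoped Matrix.Norms.L2Operator in
lemma SVL_mulVec_sq_bound {n : ℕ} (M : Matrix (Fin n) (Fin n) ℝ) (z : Fin n → ℝ) :
    ∑ i, (M *ᵥ z) i ^ 2 ≤ matSpectralNorm M ^ 2 * ∑ i, z i ^ 2 := by
  have h := M.l2_opNorm_mulVec ((WithLp.equiv 2 _).symm z)
  have hM : ‖M‖ = matSpectralNorm M := M.cstar_norm_def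
  have h1 : ‖(EuclideanSpace.equiv (Fin n) ℝ).symm (M *ᵥ ((WithLp.equiv 2 _).symm z))‖
      = Real.sqrt (∑ i, (M *ᵥ z) i ^ 2) := by
    rw [EuclideanSpace.norm_eq]
    congr 1
    refine Finset.sum_congr rfl fun i _ => ?_
    simp [Real.norm_eq_abs, sq_abs, WithLp.equiv_symm_apply, PiLp.toLp_apply, mulVec, dotProduct]
  have h2 : ‖(WithLp.equiv 2 (Fin n → ℝ)).symm z‖ = Real.sqrt (∑ i, z i ^ 2) := by
    rw [EuclideanSpace.norm_eq]
    congr 1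
    refine Finset.sum_congr rfl fun i _ => ?_
    simp [Real.norm_eq_abs, sq_abs, WithLp.equiv_symm_apply, PiLp.toLp_apply]
  rw [h1, h2, hM] at h
  have hs1 : (0:ℝ) ≤ ∑ i, (M *ᵥ z) i ^ 2 := Finset.sum_nonneg fun i _ => sq_nonneg _
  have hs2 : (0:ℝ) ≤ ∑ i, z i ^ 2 := Finset.sum_nonneg fun i _ => sq_nonneg _
  nlinarith [Real.sq_sqrt hs1, Real.sq_sqrt hs2, Real.sqrt_nonneg (∑ i, (M *ᵥ z) i ^ 2),
    Real.sqrt_nonneg (∑ i, z i ^ 2), norm_nonneg (toEuclideanCLM (𝕜 := ℝ) M)]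

lemma SVL_kron_quad {n : ℕ} (A : Matrix (Fin 2) (Fin 2) ℝ) (B : Matrix (Fin n) (Fin n) ℝ)
    (z : Fin 2 × Fin n → ℝ) :
    z ⬝ᵥ ((A ⊗ₖ B) *ᵥ z) =
      ∑ p, ∑ q, A p q * ((fun i => z (p, i)) ⬝ᵥ (B *ᵥ fun j => z (q, j))) := by
  simp only [dotProduct, mulVec, kroneckerMap_apply, Fintype.sum_prod_type,
    Finset.mul_sum, Finset.sum_mul]
  refine Finset.sum_congr rfl fun p _ => ?_
  rw [Finset.sum_comm]
  refine Finset.sum_congr rfl fun q _ => ?_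
  refine Finset.sum_congr rfl fun i _ => ?_
  refine Finset.sum_congr rfl fun j _ => ?_
  ring

lemma SVL_sum_hat {n : ℕ} (hn : (n:ℝ) ≠ 0) (z w : Fin n → ℝ) :
    ∑ i, (z i - (∑ j, z j)/n) * (w i - (∑ j, w j)/n)
      = ∑ i, z i * w i - n * ((∑ j, z j)/n) * ((∑ j, w j)/n) := by
  have h : ∀ i ∈ Finset.univ, (z i - (∑ j, z j)/n) * (w i - (∑ j, w j)/n)
      = z i * w i - ((∑ j, z j)/n) * w i - ((∑ j, w j)/n) * z i
        + ((∑ j, z j)/n) * ((∑ j, w j)/n) := fun i _ => by ring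
  rw [Finset.sum_congr rfl h]
  simp only [Finset.sum_add_distrib, Finset.sum_sub_distrib, ← Finset.mul_sum,
    Finset.sum_const, Finset.card_univ, Fintype.card_fin, nsmul_eq_mul]
  field_simp
  ring

lemma SVL_quad2_nonneg {P : Matrix (Fin 2) (Fin 2) ℝ} (hP : P.PosSemidef) (x y : ℝ) :
    0 ≤ SVLqf P x y := by
  have := hP.dotProduct_mulVec_nonneg ![x, y]
  simp [dotProduct, mulVec, Fin.sum_univ_two] at this
  simp only [SVLqf]
  linarith

lemma SVL_quad2_pos {P : Matrix (Fin 2) (Fin 2) ℝ} (hP : P.PosDef) (x y : ℝ)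
    (hxy : ¬(x = 0 ∧ y = 0)) :
    0 < SVLqf P x y := by
  have hne : ![x, y] ≠ 0 := by
    intro h
    exact hxy ⟨congrFun h 0, congrFun h 1⟩
  have := hP.dotProduct_mulVec_pos hne
  simp [dotProduct, mulVec, Fin.sum_univ_two] at this
  simp only [SVLqf]
  linarith

lemma SVL_expand3 {n : ℕ} (c1 c2 c3 : ℝ) (aa bb : Fin n → ℝ) :
    ∑ i, (c1 * (aa i * aa i) + c2 * (aa i * bb i) + c3 * (bb i * bb i))
      = c1 * ∑ i, aa i * aa i + c2 * ∑ i, aa i * bb i + c3 * ∑ i, bb i * bb i := by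
  simp [Finset.sum_add_distrib, Finset.mul_sum]

lemma SVL_expand4 {n : ℕ} (c1 c2 c3 c4 : ℝ) (aa bb : Fin n → ℝ) :
    ∑ i, (c1 * (aa i * aa i) + c2 * (aa i * bb i) + c3 * (bb i * aa i) + c4 * (bb i * bb i))
      = c1 * ∑ i, aa i * aa i + c2 * ∑ i, aa i * bb i + c3 * ∑ i, bb i * aa i
        + c4 * ∑ i, bb i * bb i := by
  simp [Finset.sum_add_distrib, Finset.mul_sum]


set_option maxHeartbeats 2000000 in
/-- Theorem 2: feasibility of the two LMIs certifies linear
convergence of the projected dynamics `G_m` with rate `ρ` and constant `cond(T)`,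
`T = P ⊗ Π + Q ⊗ (I − Π)`. -/
theorem lmi_implies_linear_convergence {n : ℕ} (hn : 1 ≤ n)
    (L : Matrix (Fin n) (Fin n) ℝ)
    (hL1 : L *ᵥ onesVec n = 0) (hL2 : onesVec n ᵥ* L = 0)
    (hker : ∀ v : Fin n → ℝ, L *ᵥ v = 0 ↔ ∃ c : ℝ, v = fun _ => c)
    (σ : ℝ) (hσ : σ = matSpectralNorm (1 - consensusProj n - L)) (hσ1 : σ < 1)
    (μ Lf x_opt : ℝ) (hμ : 0 < μ) (hμL : μ ≤ Lf)
    (g : Fin n → ℝ → ℝ)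
    (hopt : ∑ i, g i x_opt = 0)
    (hsec : ∀ i : Fin n, ∀ x : ℝ,
      -2 * μ * Lf * (x - x_opt) ^ 2
        + 2 * (Lf + μ) * (x - x_opt) * (g i x - g i x_opt)
        - 2 * (g i x - g i x_opt) ^ 2 ≥ 0)
    (α ζ δ η : ℝ) (hα : α ≠ 0) (hζ : ζ ≠ 0) (hη : η ≠ 0)
    -- LMI data
    (P Q : Matrix (Fin 2) (Fin 2) ℝ) (hP : P.PosDef) (hQ : Q.PosDef)
    (lam0 lam1 : ℝ) (hlam0 : 0 ≤ lam0) (hlam1 : 0 ≤ lam1)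
    (ρ : ℝ) (hρ0 : 0 < ρ) (hρ1 : ρ < 1)
    -- LMI (i): consensus direction
    (hLMI1 :
      (-((Xp α)ᵀ * blkDiagRho P ρ * Xp α
          + lam0 • (Ypᵀ * M0mat μ Lf * Yp))).PosSemidef)
    -- LMI (ii): disagreement direction
    (hLMI2 :
      (-((Xq α ζ)ᵀ * blkDiagRho Q ρ * Xq α ζ
          + lam0 • (Yqxᵀ * M0mat μ Lf * Yqx)
          + lam1 • ((Yqy δ η)ᵀ * M1mat σ * Yqy δ η))).PosSemidef)
    -- fixed point of G_m
    (w1s w2s xs ys us vs : Fin n → ℝ)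
    (hfix1 : w1s = w1s - α • us - ζ • vs)
    (hfix2 : w2s = (1 - consensusProj n) *ᵥ (w1s + w2s - vs))
    (hfix3 : xs = w1s - vs)
    (hfix4 : ys = δ • w1s + η • w2s)
    (hfix5 : us = fun i => g i (xs i))
    (hfix6 : vs = L *ᵥ ys)
    -- trajectory of G_m
    (w1 w2 y v x u : ℕ → Fin n → ℝ)
    (htr1 : ∀ k, y k = δ • w1 k + η • w2 k)
    (htr2 : ∀ k, v k = L *ᵥ y k)
    (htr3 : ∀ k, x k = w1 k - v k)
    (htr4 : ∀ k, u k = fun i => g i (x k i))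
    (htr5 : ∀ k, w1 (k + 1) = w1 k - α • u k - ζ • v k)
    (htr6 : ∀ k, w2 (k + 1) = (1 - consensusProj n) *ᵥ (w1 k + w2 k - v k)) :
    ∀ T : Matrix (Fin 2 × Fin n) (Fin 2 × Fin n) ℝ,
      T = P ⊗ₖ consensusProj n + Q ⊗ₖ (1 - consensusProj n) →
      ∀ (hT : T.IsHermitian) (k : ℕ),
        (∑ i, (w1 k i - w1s i) ^ 2) + (∑ i, (w2 k i - w2s i) ^ 2) ≤
          ((⨆ j, hT.eigenvalues j) / (⨅ j, hT.eigenvalues j)) * ρ ^ (2 * k) *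
            ((∑ i, (w1 0 i - w1s i) ^ 2) + (∑ i, (w2 0 i - w2s i) ^ 2)) := by
  intro T hTdef hT k
  haveI : Nonempty (Fin n) := ⟨⟨0, by omega⟩⟩
  have hn0 : (0:ℝ) < (n:ℝ) := by exact_mod_cast Nat.lt_of_lt_of_le Nat.zero_lt_one hn
  have hnne : (n:ℝ) ≠ 0 := ne_of_gt hn0
  -- projection facts
  have projv : ∀ z : Fin n → ℝ,
      (1 - consensusProj n) *ᵥ z = fun i => z i - (∑ j, z j)/(n:ℝ) := by
    intro z
    funext i
    simp only [mulVec, dotProduct, Matrix.sub_apply, Matrix.one_apply, consensusProj,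
      Matrix.of_apply, sub_mul, Finset.sum_sub_distrib, one_mul, ite_mul, zero_mul]
    rw [Finset.sum_ite_eq Finset.univ i z]
    simp only [Finset.mem_univ, if_true]
    rw [← Finset.mul_sum]
    ring
  have sumL0 : ∀ z : Fin n → ℝ, ∑ i, (L *ᵥ z) i = 0 := by
    intro z
    calc ∑ i, (L *ᵥ z) i = (onesVec n) ⬝ᵥ (L *ᵥ z) := by simp [dotProduct, onesVec]
      _ = (onesVec n ᵥ* L) ⬝ᵥ z := by rw [dotProduct_mulVec]
      _ = 0 := by rw [hL2]; simp
  have Lconst : ∀ c : ℝ, L *ᵥ (fun _ => c) = 0 := by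
    intro c
    have h : (fun _ : Fin n => c) = c • onesVec n := by funext i; simp [onesVec]
    rw [h, mulVec_smul, hL1, smul_zero]
  -- fixed point analysis
  have hsumvs : ∑ i, vs i = 0 := by rw [hfix6]; exact sumL0 ys
  have hxs_c : ∀ i, xs i = (∑ j, w1s j)/(n:ℝ) + (∑ j, w2s j)/(n:ℝ) := by
    intro i
    have h2 := congrFun hfix2 i
    rw [projv] at h2
    have hsum : ∑ j, (w1s + w2s - vs) j = ∑ j, w1s j + ∑ j, w2s j := by
      simp only [Pi.add_apply, Pi.sub_apply, Finset.sum_sub_distrib, Finset.sum_add_distrib]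
      rw [hsumvs]; ring
    rw [hsum] at h2
    have h3 := congrFun hfix3 i
    simp only [Pi.add_apply, Pi.sub_apply] at h2 h3
    rw [h3]
    have hdiv : (∑ j, w1s j + ∑ j, w2s j)/(n:ℝ) = (∑ j, w1s j)/(n:ℝ) + (∑ j, w2s j)/(n:ℝ) :=
      add_div _ _ _
    linarith [h2]
  have hsumus : ∑ i, us i = 0 := by
    have h' : ∀ i, α * us i = - (ζ * vs i) := by
      intro i
      have := congrFun hfix1 i
      simp only [Pi.sub_apply, Pi.smul_apply, smul_eq_mul] at this
      linarith
    have hs : α * ∑ i, us i = ζ * ∑ i, vs i * (-1) := by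
      rw [Finset.mul_sum, Finset.mul_sum]
      refine Finset.sum_congr rfl fun i _ => ?_
      have := h' i; ring_nf; ring_nf at this; linarith
    have hz : ∑ i, vs i * (-1) = 0 := by
      rw [← Finset.sum_mul, hsumvs]; ring
    rw [hz, mul_zero] at hs
    exact (mul_eq_zero.mp hs).resolve_left hα
  have hxs : ∀ i, xs i = x_opt := by
    set c : ℝ := (∑ j, w1s j)/(n:ℝ) + (∑ j, w2s j)/(n:ℝ) with hcdef
    have hgc : ∑ i, g i c = 0 := by
      have h : ∀ i, g i c = us i := by
        intro i; rw [← hxs_c i]; exact (congrFun hfix5 i).symm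
      rw [Finset.sum_congr rfl fun i _ => h i]; exact hsumus
    have hkey : ∀ i, (0:ℝ) ≤ -2*μ*Lf*(c - x_opt)^2
        + 2*(Lf+μ)*(c-x_opt)*(g i c - g i x_opt) - 2*(g i c - g i x_opt)^2 := by
      intro i; have := hsec i c; linarith
    have hsum := Finset.sum_nonneg fun i (_ : i ∈ Finset.univ) => hkey i
    have hdsum : ∑ i, (g i c - g i x_opt) = 0 := by
      rw [Finset.sum_sub_distrib, hgc, hopt]; ring
    have hSq : (0:ℝ) ≤ ∑ i, (g i c - g i x_opt)^2 :=
      Finset.sum_nonneg fun i _ => sq_nonneg _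
    have heq : ∑ i, (-2*μ*Lf*(c - x_opt)^2
          + 2*(Lf+μ)*(c-x_opt)*(g i c - g i x_opt) - 2*(g i c - g i x_opt)^2)
        = (n:ℝ) * (-2*μ*Lf*(c - x_opt)^2)
          + 2*(Lf+μ)*(c-x_opt)*(∑ i, (g i c - g i x_opt))
          - 2*∑ i, (g i c - g i x_opt)^2 := by
      rw [Finset.sum_sub_distrib, Finset.sum_add_distrib, Finset.sum_const,
        ← Finset.mul_sum, ← Finset.mul_sum, Finset.card_univ, Fintype.card_fin, nsmul_eq_mul]
    rw [heq, hdsum] at hsum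
    have hml : (0:ℝ) < μ * Lf := mul_pos hμ (lt_of_lt_of_le hμ hμL)
    have h2 : (c - x_opt)^2 ≤ 0 := by nlinarith [mul_pos hn0 hml]
    have h3 : (c - x_opt)^2 = 0 := le_antisymm h2 (sq_nonneg _)
    have h4 : c = x_opt := sub_eq_zero.mp (sq_eq_zero_iff.mp h3)
    intro i; rw [hxs_c i]; exact h4
  have hus : ∀ i, us i = g i x_opt := by
    intro i; rw [congrFun hfix5 i, hxs i]
  -- error sequences
  set e1 : ℕ → Fin n → ℝ := fun k i => w1 k i - w1s i with he1
  set e2 : ℕ → Fin n → ℝ := fun k i => w2 k i - w2s i with he2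
  set du : ℕ → Fin n → ℝ := fun k i => g i (x k i) - g i x_opt with hdu
  set dv : ℕ → Fin n → ℝ := fun k i => v k i - vs i with hdvdef
  set dy : ℕ → Fin n → ℝ := fun k i => y k i - ys i with hdydef
  have hdv_eq : ∀ k, dv k = L *ᵥ (dy k) := by
    intro k
    funext i
    simp only [hdvdef, hdydef]
    rw [htr2, hfix6]
    simp [mulVec, dotProduct, Finset.sum_sub_distrib, mul_sub]
  have hsumdv : ∀ k, ∑ i, dv k i = 0 := by
    intro k; rw [hdv_eq k]; exact sumL0 _
  have hdy_eq : ∀ k i, dy k i = δ * e1 k i + η * e2 k i := by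
    intro k i
    simp only [hdydef, he1, he2]
    rw [htr1, hfix4]
    simp only [Pi.add_apply, Pi.smul_apply, smul_eq_mul]
    ring
  have hdx_eq : ∀ k i, x k i - x_opt = e1 k i - dv k i := by
    intro k i
    have h3 := congrFun (htr3 k) i
    have h3s := congrFun hfix3 i
    simp only [Pi.sub_apply] at h3 h3s
    simp only [he1, hdvdef]
    have := hxs i
    linarith
  have hdu_sec : ∀ k i, (0:ℝ) ≤ -2*μ*Lf*(e1 k i - dv k i)^2
      + 2*(Lf+μ)*(e1 k i - dv k i)*(du k i) - 2*(du k i)^2 := by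
    intro k i
    have h := hsec i (x k i)
    rw [hdx_eq k i] at h
    simp only [hdu]
    linarith
  have he1_step : ∀ k i, e1 (k+1) i = e1 k i - α * du k i - ζ * dv k i := by
    intro k i
    have ht := congrFun (htr5 k) i
    have hf := congrFun hfix1 i
    have hu := congrFun (htr4 k) i
    simp only [Pi.sub_apply, Pi.smul_apply, smul_eq_mul] at ht hf
    simp only [he1, hdu, hdvdef]
    rw [ht, hu]
    have husi := hus i
    linear_combination (-1 : ℝ) * hf + α * husi
  have he2_step : ∀ k i, e2 (k+1) i
      = (e1 k i + e2 k i - dv k i) - ((∑ j, e1 k j)/(n:ℝ) + (∑ j, e2 k j)/(n:ℝ)) := by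
    intro k i
    have ht := congrFun (htr6 k) i
    rw [projv] at ht
    have hf := congrFun hfix2 i
    rw [projv] at hf
    simp only [Pi.add_apply, Pi.sub_apply] at ht hf
    have hs1 : ∑ j, (w1 k j + w2 k j - v k j)
        = ∑ j, w1 k j + ∑ j, w2 k j - ∑ j, v k j := by
      rw [Finset.sum_sub_distrib, Finset.sum_add_distrib]
    have hs2 : ∑ j, (w1s j + w2s j - vs j)
        = ∑ j, w1s j + ∑ j, w2s j - ∑ j, vs j := by
      rw [Finset.sum_sub_distrib, Finset.sum_add_distrib]
    have hsv : ∑ j, v k j = 0 := by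
      have := hsumdv k
      simp only [hdvdef] at this
      rw [Finset.sum_sub_distrib] at this
      rw [hsumvs] at this
      linarith
    have hse1 : ∑ j, e1 k j = ∑ j, w1 k j - ∑ j, w1s j := by
      simp only [he1]; rw [Finset.sum_sub_distrib]
    have hse2 : ∑ j, e2 k j = ∑ j, w2 k j - ∑ j, w2s j := by
      simp only [he2]; rw [Finset.sum_sub_distrib]
    rw [hse1, hse2]
    simp only [he1, he2, hdvdef]
    rw [hs1, hsv] at ht
    rw [hs2, hsumvs] at hf
    linear_combination ht - hf
  -- Lyapunov function
  set Vf : ℕ → ℝ := fun k => (n:ℝ) * SVLqf P ((∑ i, e1 k i)/(n:ℝ)) ((∑ i, e2 k i)/(n:ℝ))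
      + ∑ i, SVLqf Q (e1 k i - (∑ j, e1 k j)/(n:ℝ)) (e2 k i - (∑ j, e2 k j)/(n:ℝ)) with hVf
  -- the Lyapunov decrease
  have hstep : ∀ k, Vf (k+1) ≤ ρ^2 * Vf k := by
    intro k
    have hm1 : True := trivial
    set m1 : ℝ := (∑ j, e1 k j)/(n:ℝ) with hm1def
    set m2 : ℝ := (∑ j, e2 k j)/(n:ℝ) with hm2def
    set mu : ℝ := (∑ j, du k j)/(n:ℝ) with hmudef
    have hsum1 : (∑ i, e1 (k+1) i)/(n:ℝ) = m1 - α * mu := by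
      rw [Finset.sum_congr rfl (fun i _ => he1_step k i)]
      simp only [Finset.sum_sub_distrib, ← Finset.mul_sum, hsumdv k, mul_zero, sub_zero]
      rw [hm1def, hmudef]
      field_simp
    have hsum2 : (∑ i, e2 (k+1) i)/(n:ℝ) = 0 := by
      rw [Finset.sum_congr rfl (fun i _ => he2_step k i)]
      simp only [Finset.sum_sub_distrib, Finset.sum_add_distrib, Finset.sum_const,
        Finset.card_univ, Fintype.card_fin, nsmul_eq_mul, hsumdv k]
      field_simp
      ring
    have hat1 : ∀ i, e1 (k+1) i - (m1 - α * mu)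
        = (e1 k i - m1) - α*(du k i - mu) - ζ*(dv k i) := by
      intro i; rw [he1_step k i, hm1def, hmudef]; ring
    have hat2 : ∀ i, e2 (k+1) i - 0
        = ((e1 k i - m1) + (e2 k i - m2)) - dv k i := by
      intro i; rw [he2_step k i, hm1def, hm2def]; ring
    have hVk1 : Vf (k+1) = (n:ℝ) * SVLqf P (m1 - α*mu) 0
        + ∑ i, SVLqf Q ((e1 k i - m1) - α*(du k i - mu) - ζ*(dv k i))
            (((e1 k i - m1) + (e2 k i - m2)) - dv k i) := by
      rw [hVf]
      simp only
      rw [hsum1, hsum2]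
      congr 1
      refine Finset.sum_congr rfl fun i _ => ?_
      rw [hat1 i, hat2 i]
    have hVkk : Vf k = (n:ℝ) * SVLqf P m1 m2
        + ∑ i, SVLqf Q (e1 k i - m1) (e2 k i - m2) := by
      rw [hVf]
    -- consensus inequality
    have hcons := SVL_lmi1 hLMI1 m1 m2 mu
    have hconsn : (n:ℝ) * SVLqf P (m1 - α*mu) 0
        ≤ (n:ℝ) * (ρ^2 * SVLqf P m1 m2
            - lam0 * (-2*μ*Lf * m1^2 + 2*(Lf+μ)*m1*mu - 2*mu^2)) :=
      mul_le_mul_of_nonneg_left (by linarith) (le_of_lt hn0)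
    -- disagreement inequality, pointwise
    have hdis : ∀ i, SVLqf Q ((e1 k i - m1) - α*(du k i - mu) - ζ*(dv k i))
          (((e1 k i - m1) + (e2 k i - m2)) - dv k i)
        ≤ ρ^2 * SVLqf Q (e1 k i - m1) (e2 k i - m2)
          - lam0 * (-2*μ*Lf*((e1 k i - m1) - dv k i)^2
              + 2*(Lf+μ)*((e1 k i - m1) - dv k i)*(du k i - mu) - 2*(du k i - mu)^2)
          - lam1 * ((σ^2-1)*(δ*(e1 k i - m1)+η*(e2 k i - m2))^2
              + 2*(δ*(e1 k i - m1)+η*(e2 k i - m2))*(dv k i) - (dv k i)^2) := by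
      intro i
      have := SVL_lmi2 hLMI2 (e1 k i - m1) (e2 k i - m2) (du k i - mu) (dv k i)
      linarith
    have hdissum := Finset.sum_le_sum fun i (_ : i ∈ Finset.univ) => hdis i
    have hsplit : ∑ i, (ρ^2 * SVLqf Q (e1 k i - m1) (e2 k i - m2)
          - lam0 * (-2*μ*Lf*((e1 k i - m1) - dv k i)^2
              + 2*(Lf+μ)*((e1 k i - m1) - dv k i)*(du k i - mu) - 2*(du k i - mu)^2)
          - lam1 * ((σ^2-1)*(δ*(e1 k i - m1)+η*(e2 k i - m2))^2
              + 2*(δ*(e1 k i - m1)+η*(e2 k i - m2))*(dv k i) - (dv k i)^2))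
        = ρ^2 * ∑ i, SVLqf Q (e1 k i - m1) (e2 k i - m2)
          - lam0 * ∑ i, (-2*μ*Lf*((e1 k i - m1) - dv k i)^2
              + 2*(Lf+μ)*((e1 k i - m1) - dv k i)*(du k i - mu) - 2*(du k i - mu)^2)
          - lam1 * ∑ i, ((σ^2-1)*(δ*(e1 k i - m1)+η*(e2 k i - m2))^2
              + 2*(δ*(e1 k i - m1)+η*(e2 k i - m2))*(dv k i) - (dv k i)^2) := by
      rw [Finset.sum_sub_distrib, Finset.sum_sub_distrib, ← Finset.mul_sum, ← Finset.mul_sum,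
        ← Finset.mul_sum]
    -- the sector sum is globally nonnegative
    have hsec_tot : (0:ℝ) ≤ (n:ℝ) * (-2*μ*Lf * m1^2 + 2*(Lf+μ)*m1*mu - 2*mu^2)
        + ∑ i, (-2*μ*Lf*((e1 k i - m1) - dv k i)^2
            + 2*(Lf+μ)*((e1 k i - m1) - dv k i)*(du k i - mu) - 2*(du k i - mu)^2) := by
      set dxv : Fin n → ℝ := fun i => e1 k i - dv k i with hdxv
      have hmdx : (∑ j, dxv j)/(n:ℝ) = m1 := by
        simp only [hdxv]
        rw [Finset.sum_sub_distrib, hsumdv k, hm1def]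
        ring
      have hfull : (0:ℝ) ≤ (-2*μ*Lf) * (∑ i, dxv i * dxv i)
          + (2*(Lf+μ)) * (∑ i, dxv i * du k i) + (-2) * (∑ i, du k i * du k i) := by
        rw [← SVL_expand3]
        refine Finset.sum_nonneg fun i _ => ?_
        simp only [hdxv]
        nlinarith [hdu_sec k i]
      have hsec_eq : ∑ i, (-2*μ*Lf*((e1 k i - m1) - dv k i)^2
            + 2*(Lf+μ)*((e1 k i - m1) - dv k i)*(du k i - mu) - 2*(du k i - mu)^2)
          = (-2*μ*Lf) * (∑ i, dxv i * dxv i - (n:ℝ)*m1*m1)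
            + (2*(Lf+μ)) * (∑ i, dxv i * du k i - (n:ℝ)*m1*mu)
            + (-2) * (∑ i, du k i * du k i - (n:ℝ)*mu*mu) := by
        have hpt : ∀ i ∈ Finset.univ, (-2*μ*Lf*((e1 k i - m1) - dv k i)^2
              + 2*(Lf+μ)*((e1 k i - m1) - dv k i)*(du k i - mu) - 2*(du k i - mu)^2)
            = (-2*μ*Lf) * ((dxv i - (∑ j, dxv j)/(n:ℝ)) * (dxv i - (∑ j, dxv j)/(n:ℝ)))
              + (2*(Lf+μ)) * ((dxv i - (∑ j, dxv j)/(n:ℝ)) * (du k i - (∑ j, du k j)/(n:ℝ)))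
              + (-2) * ((du k i - (∑ j, du k j)/(n:ℝ)) * (du k i - (∑ j, du k j)/(n:ℝ))) := by
          intro i _
          rw [hmdx, ← hmudef]
          simp only [hdxv]
          ring
        rw [Finset.sum_congr rfl hpt, SVL_expand3,
          SVL_sum_hat hnne dxv dxv, SVL_sum_hat hnne dxv (du k), SVL_sum_hat hnne (du k) (du k),
          hmdx, ← hmudef]
        try ring
      rw [hsec_eq]
      nlinarith [hfull]
    -- the graph IQC sum is nonnegative
    have hm1q : (0:ℝ) ≤ ∑ i, ((σ^2-1)*(δ*(e1 k i - m1)+η*(e2 k i - m2))^2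
        + 2*(δ*(e1 k i - m1)+η*(e2 k i - m2))*(dv k i) - (dv k i)^2) := by
      set hy : Fin n → ℝ := fun i => δ*(e1 k i - m1) + η*(e2 k i - m2) with hhy
      have hsumhy : ∑ i, hy i = 0 := by
        simp only [hhy, Finset.sum_add_distrib, ← Finset.mul_sum, Finset.sum_sub_distrib,
          Finset.sum_const, Finset.card_univ, Fintype.card_fin, nsmul_eq_mul]
        rw [hm1def, hm2def]
        field_simp
        ring
      have hLhy : L *ᵥ hy = fun i => dv k i := by
        have hhy2 : hy = fun i => dy k i - (δ*m1 + η*m2) := by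
          funext i
          rw [hhy, hdy_eq k i]
          ring
        rw [hhy2]
        have hsplit2 : (fun i => dy k i - (δ*m1 + η*m2))
            = dy k - (fun _ => (δ*m1 + η*m2)) := by funext i; simp
        rw [hsplit2, mulVec_sub, Lconst, ← hdv_eq k]
        funext i
        simp
      have hMg : ((1 - consensusProj n - L) *ᵥ hy) = fun i => hy i - dv k i := by
        rw [sub_mulVec, projv hy]
        funext i
        simp only [Pi.sub_apply]
        rw [hsumhy]
        have := congrFun hLhy i
        rw [this]
        ring
      have hb := SVL_mulVec_sq_bound (1 - consensusProj n - L) hy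
      rw [hMg, ← hσ] at hb
      have hrw : ∑ i, ((σ^2-1)*(δ*(e1 k i - m1)+η*(e2 k i - m2))^2
            + 2*(δ*(e1 k i - m1)+η*(e2 k i - m2))*(dv k i) - (dv k i)^2)
          = σ^2 * ∑ i, hy i ^2 - ∑ i, (hy i - dv k i)^2 := by
        rw [Finset.mul_sum, ← Finset.sum_sub_distrib]
        refine Finset.sum_congr rfl fun i _ => ?_
        simp only [hhy]
        ring
      rw [hrw]
      linarith [hb]
    -- put everything together
    rw [hVk1, hVkk]
    rw [hsplit] at hdissum
    have hl0 := mul_nonneg hlam0 hsec_tot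
    have hl1 := mul_nonneg hlam1 hm1q
    nlinarith [hconsn, hdissum, hl0, hl1]
  -- decay of Vf
  have hdecay : ∀ k, Vf k ≤ (ρ^2)^k * Vf 0 := by
    intro k
    induction k with
    | zero => simp
    | succ k ih =>
      calc Vf (k+1) ≤ ρ^2 * Vf k := hstep k
        _ ≤ ρ^2 * ((ρ^2)^k * Vf 0) := mul_le_mul_of_nonneg_left ih (sq_nonneg ρ)
        _ = (ρ^2)^(k+1) * Vf 0 := by ring
  -- the quadratic form of T
  have hPiq : ∀ a b : Fin n → ℝ, a ⬝ᵥ (consensusProj n *ᵥ b)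
      = (n:ℝ) * ((∑ i, a i)/(n:ℝ)) * ((∑ i, b i)/(n:ℝ)) := by
    intro a b
    have hcb : consensusProj n *ᵥ b = fun _ => (∑ j, b j)/(n:ℝ) := by
      funext i
      simp only [consensusProj, Matrix.of_apply, mulVec, dotProduct]
      rw [← Finset.mul_sum]
      ring
    rw [hcb]
    simp only [dotProduct]
    rw [← Finset.sum_mul]
    field_simp
  have hPiq2 : ∀ a b : Fin n → ℝ, a ⬝ᵥ ((1 - consensusProj n) *ᵥ b)
      = ∑ i, a i * b i - (n:ℝ) * ((∑ i, a i)/(n:ℝ)) * ((∑ i, b i)/(n:ℝ)) := by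
    intro a b
    rw [projv]
    simp only [dotProduct, mul_sub, Finset.sum_sub_distrib]
    rw [← Finset.sum_mul]
    field_simp
  have hTq : ∀ z : Fin 2 × Fin n → ℝ, z ⬝ᵥ (T *ᵥ z)
      = (n:ℝ) * SVLqf P ((∑ i, z (0,i))/(n:ℝ)) ((∑ i, z (1,i))/(n:ℝ))
        + ∑ i, SVLqf Q (z (0,i) - (∑ j, z (0,j))/(n:ℝ)) (z (1,i) - (∑ j, z (1,j))/(n:ℝ)) := by
    intro z
    rw [hTdef, add_mulVec, dotProduct_add, SVL_kron_quad, SVL_kron_quad]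
    simp only [Fin.sum_univ_two]
    rw [hPiq, hPiq, hPiq, hPiq, hPiq2, hPiq2, hPiq2, hPiq2]
    have hqsum : ∑ i, SVLqf Q (z (0,i) - (∑ j, z (0,j))/(n:ℝ)) (z (1,i) - (∑ j, z (1,j))/(n:ℝ))
        = Q 0 0 * (∑ i, z (0,i) * z (0,i) - (n:ℝ) * ((∑ i, z (0,i))/(n:ℝ)) * ((∑ i, z (0,i))/(n:ℝ)))
          + Q 0 1 * (∑ i, z (0,i) * z (1,i) - (n:ℝ) * ((∑ i, z (0,i))/(n:ℝ)) * ((∑ i, z (1,i))/(n:ℝ)))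
          + Q 1 0 * (∑ i, z (1,i) * z (0,i) - (n:ℝ) * ((∑ i, z (1,i))/(n:ℝ)) * ((∑ i, z (0,i))/(n:ℝ)))
          + Q 1 1 * (∑ i, z (1,i) * z (1,i) - (n:ℝ) * ((∑ i, z (1,i))/(n:ℝ)) * ((∑ i, z (1,i))/(n:ℝ))) := by
      simp only [SVLqf]
      simp only [mul_assoc]
      rw [SVL_expand4 (Q 0 0) (Q 0 1) (Q 1 0) (Q 1 1) (fun i => z (0,i) - (∑ j, z (0,j))/(n:ℝ))
        (fun i => z (1,i) - (∑ j, z (1,j))/(n:ℝ)),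
        SVL_sum_hat hnne (fun i => z (0,i)) (fun i => z (0,i)),
        SVL_sum_hat hnne (fun i => z (0,i)) (fun i => z (1,i)),
        SVL_sum_hat hnne (fun i => z (1,i)) (fun i => z (0,i)),
        SVL_sum_hat hnne (fun i => z (1,i)) (fun i => z (1,i))]
      ring
    rw [hqsum]
    simp only [SVLqf]
    ring
  -- the error vector
  set zeta : ℕ → Fin 2 × Fin n → ℝ :=
    fun k pi => if pi.1 = 0 then e1 k pi.2 else e2 k pi.2 with hzeta
  have hz0 : ∀ k i, zeta k (0, i) = e1 k i := by intro k i; simp [hzeta]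
  have hz1 : ∀ k i, zeta k (1, i) = e2 k i := by
    intro k i; simp [hzeta]
  have hVT : ∀ k, Vf k = zeta k ⬝ᵥ (T *ᵥ zeta k) := by
    intro k
    rw [hTq (zeta k), hVf]
    simp only [hz0, hz1]
  have hzsq : ∀ k, ∑ pi : Fin 2 × Fin n, (zeta k pi)^2
      = ∑ i, (e1 k i)^2 + ∑ i, (e2 k i)^2 := by
    intro k
    rw [Fintype.sum_prod_type, Fin.sum_univ_two]
    simp only [hz0, hz1]
  -- T is positive definite
  have hTpd : T.PosDef := by
    refine Matrix.PosDef.of_dotProduct_mulVec_pos hT fun z hz => ?_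
    have hst : star z = z := funext fun _ => rfl
    rw [hst, hTq z]
    by_cases hflat : ∀ i, z (0,i) = (∑ j, z (0,j))/(n:ℝ) ∧ z (1,i) = (∑ j, z (1,j))/(n:ℝ)
    · have hsum0 : ∑ i, SVLqf Q (z (0,i) - (∑ j, z (0,j))/(n:ℝ))
          (z (1,i) - (∑ j, z (1,j))/(n:ℝ)) = 0 := by
        rw [Finset.sum_congr rfl fun i _ => ?_]
        · exact Finset.sum_const_zero
        · rw [(hflat i).1, (hflat i).2]
          simp [SVLqf]
      have hm_ne : ¬((∑ j, z (0,j))/(n:ℝ) = 0 ∧ (∑ j, z (1,j))/(n:ℝ) = 0) := by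
        rintro ⟨h0, h1⟩
        apply hz
        funext pi
        obtain ⟨p, i⟩ := pi
        fin_cases p
        · exact (hflat i).1.trans h0
        · exact (hflat i).2.trans h1
      have := SVL_quad2_pos hP _ _ (by tauto)
      rw [hsum0]
      have := mul_pos hn0 this
      linarith
    · push_neg at hflat
      obtain ⟨i0, hi0⟩ := hflat
      have hpt : 0 < SVLqf Q (z (0,i0) - (∑ j, z (0,j))/(n:ℝ))
          (z (1,i0) - (∑ j, z (1,j))/(n:ℝ)) := by
        refine SVL_quad2_pos hQ _ _ ?_
        rintro ⟨h0, h1⟩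
        have h0' := sub_eq_zero.mp h0
        have h1' := sub_eq_zero.mp h1
        tauto
      have hsum_pos : 0 < ∑ i, SVLqf Q (z (0,i) - (∑ j, z (0,j))/(n:ℝ))
          (z (1,i) - (∑ j, z (1,j))/(n:ℝ)) := by
        refine Finset.sum_pos' (fun i _ => SVL_quad2_nonneg hQ.posSemidef _ _) ⟨i0, Finset.mem_univ _, hpt⟩
      have hP0 : 0 ≤ (n:ℝ) * SVLqf P ((∑ i, z (0,i))/(n:ℝ)) ((∑ i, z (1,i))/(n:ℝ)) :=
        mul_nonneg (le_of_lt hn0) (SVL_quad2_nonneg hP.posSemidef _ _)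
      linarith
  have heigpos : ∀ j, 0 < hT.eigenvalues j := fun j => hTpd.eigenvalues_pos j
  have hinfpos : 0 < ⨅ j, hT.eigenvalues j := by
    obtain ⟨j0, _, hj0⟩ := Finset.exists_min_image Finset.univ hT.eigenvalues
      ⟨Classical.arbitrary _, Finset.mem_univ _⟩
    have hle : hT.eigenvalues j0 ≤ ⨅ j, hT.eigenvalues j :=
      le_ciInf fun j => hj0 j (Finset.mem_univ j)
    exact lt_of_lt_of_le (heigpos j0) hle
  -- final computation
  have hlow := (SVL_quad_eig_bounds T hT (zeta k)).1
  have hup := (SVL_quad_eig_bounds T hT (zeta 0)).2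
  rw [hzsq k, ← hVT k] at hlow
  rw [hzsq 0, ← hVT 0] at hup
  have hSk : ∑ i, (e1 k i)^2 + ∑ i, (e2 k i)^2
      = (∑ i, (w1 k i - w1s i) ^ 2) + (∑ i, (w2 k i - w2s i) ^ 2) := by
    rw [he1, he2]
  have hS0 : ∑ i, (e1 0 i)^2 + ∑ i, (e2 0 i)^2
      = (∑ i, (w1 0 i - w1s i) ^ 2) + (∑ i, (w2 0 i - w2s i) ^ 2) := by
    rw [he1, he2]
  rw [← hSk, ← hS0, pow_mul]
  rw [div_mul_eq_mul_div, div_mul_eq_mul_div, le_div_iff₀ hinfpos]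
  have hpow : (0:ℝ) ≤ (ρ^2)^k := pow_nonneg (sq_nonneg ρ) k
  have hpos0 : (0:ℝ) ≤ ∑ i, (e1 0 i)^2 + ∑ i, (e2 0 i)^2 := by
    have := Finset.sum_nonneg (fun i (_ : i ∈ (Finset.univ : Finset (Fin n))) => sq_nonneg (e1 0 i))
    have := Finset.sum_nonneg (fun i (_ : i ∈ (Finset.univ : Finset (Fin n))) => sq_nonneg (e2 0 i))
    linarith
  have hchain : (⨅ j, hT.eigenvalues j) * (∑ i, (e1 k i)^2 + ∑ i, (e2 k i)^2)
      ≤ (⨆ j, hT.eigenvalues j) * ((ρ^2)^k * (∑ i, (e1 0 i)^2 + ∑ i, (e2 0 i)^2)) := by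
    calc (⨅ j, hT.eigenvalues j) * (∑ i, (e1 k i)^2 + ∑ i, (e2 k i)^2)
        ≤ Vf k := hlow
      _ ≤ (ρ^2)^k * Vf 0 := hdecay k
      _ ≤ (ρ^2)^k * ((⨆ j, hT.eigenvalues j) * (∑ i, (e1 0 i)^2 + ∑ i, (e2 0 i)^2)) :=
          mul_le_mul_of_nonneg_left hup hpow
      _ = (⨆ j, hT.eigenvalues j) * ((ρ^2)^k * (∑ i, (e1 0 i)^2 + ∑ i, (e2 0 i)^2)) := by ring
  nlinarith [hchain]
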